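/- Deterministic form of Theorem 2 (support recovery): let W be symmetric and F-identifiable with support S⋆, K symmetric commuting with W, λ > 0 with λ|S⋆| < c₀(S⋆). If the estimation error satisfies 4‖K̂ − K‖ < c₀(S⋆) − λ|S⋆| and 2‖K̂ − K‖ < λ, then S⋆ is the unique minimizer of S ↦ Q(S) = min_{A ∈ E(S)\{0}} ‖A K̂ − K̂ A‖/‖A‖ + λ|S| over supports S ⊆ F̄. -/

import Mathlib

open Matrix ENNReal

attribute [local instance] Matrix.frobeniusNormedAddCommGroup Matrix.frobeniusNormedRing

/-- The penalized criterion `Q(S)` with values in `ℝ≥0∞` (the infimum over an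
empty collection being `∞`). -/
noncomputable def QE {N : ℕ} (Khat : Matrix (Fin N) (Fin N) ℝ) (lam : ℝ)
    (S : Finset (Fin N × Fin N)) : ℝ≥0∞ :=
  (⨅ A : {A : Matrix (Fin N) (Fin N) ℝ // A ≠ 0 ∧ A.IsSymm ∧
      ∀ p : Fin N × Fin N, p ∉ S → A p.1 p.2 = 0},
    ENNReal.ofReal (‖(A : Matrix (Fin N) (Fin N) ℝ) * Khat -
        Khat * (A : Matrix (Fin N) (Fin N) ℝ)‖ /
      ‖(A : Matrix (Fin N) (Fin N) ℝ)‖)) +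
  ENNReal.ofReal lam * S.card

/-- The constant `c₀(S⋆)` with values in `ℝ≥0∞`. -/
noncomputable def c0E {N : ℕ} (K : Matrix (Fin N) (Fin N) ℝ)
    (Sstar : Finset (Fin N × Fin N)) : ℝ≥0∞ :=
  ⨅ (S : Finset (Fin N × Fin N)) (_ : S ≠ Sstar) (_ : S.card ≤ Sstar.card)
    (A : {A : Matrix (Fin N) (Fin N) ℝ // A ≠ 0 ∧ A.IsSymm ∧
      ∀ p : Fin N × Fin N, p ∉ S → A p.1 p.2 = 0}),
    ENNReal.ofReal (‖(A : Matrix (Fin N) (Fin N) ℝ) * K -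
        K * (A : Matrix (Fin N) (Fin N) ℝ)‖ /
      ‖(A : Matrix (Fin N) (Fin N) ℝ)‖)

set_option maxHeartbeats 1000000 in
/-- Deterministic support recovery: under the stated error bounds, `S⋆` is the
unique minimizer of the penalized criterion over supports avoiding `F`. -/
theorem Sstar_unique_minimizer {N : ℕ}
    (W K Khat : Matrix (Fin N) (Fin N) ℝ)
    (hWsymm : W.IsSymm) (hKsymm : K.IsSymm)
    (hcomm : W * K = K * W) (hW0 : W ≠ 0)
    (F : Finset (Fin N × Fin N))
    (hWF : ∀ p ∈ F, W p.1 p.2 = 0)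
    -- `W` is `F`-identifiable
    (hid : ∀ A : Matrix (Fin N) (Fin N) ℝ, A.IsSymm →
      (∀ p ∈ F, A p.1 p.2 = 0) → A * K = K * A → ∃ t : ℝ, A = t • W)
    (Sstar : Finset (Fin N × Fin N))
    (hSstar : ∀ p : Fin N × Fin N, p ∈ Sstar ↔ W p.1 p.2 ≠ 0)
    (lam : ℝ) (hlam : 0 < lam)
    (h1 : ENNReal.ofReal lam * Sstar.card < c0E K Sstar)
    (h2 : ENNReal.ofReal (4 * ‖Khat - K‖) + ENNReal.ofReal lam * Sstar.card <
      c0E K Sstar)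
    (h3 : ENNReal.ofReal (2 * ‖Khat - K‖) < ENNReal.ofReal lam) :
    ∀ S : Finset (Fin N × Fin N), (∀ p ∈ S, p ∉ F) → S ≠ Sstar →
      QE Khat lam Sstar < QE Khat lam S := by
  intro S _ hSne
  set ε : ℝ := ‖Khat - K‖ with hεdef
  have hε0 : (0:ℝ) ≤ ε := norm_nonneg _
  have hWnorm : (0:ℝ) < ‖W‖ := norm_pos_iff.mpr hW0
  -- W belongs to E(S⋆)
  have hWprop : W ≠ 0 ∧ W.IsSymm ∧
      ∀ p : Fin N × Fin N, p ∉ Sstar → W p.1 p.2 = 0 := by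
    refine ⟨hW0, hWsymm, fun p hp => ?_⟩
    by_contra h
    exact hp ((hSstar p).mpr h)
  -- Q(S⋆) ≤ 2ε + λ|S⋆|
  have hWbound : ‖W * Khat - Khat * W‖ / ‖W‖ ≤ 2 * ε := by
    rw [div_le_iff₀ hWnorm]
    have key : W * Khat - Khat * W = W * (Khat - K) - (Khat - K) * W := by
      rw [mul_sub, sub_mul, hcomm]; abel
    calc ‖W * Khat - Khat * W‖
        = ‖W * (Khat - K) - (Khat - K) * W‖ := by rw [key]
      _ ≤ ‖W * (Khat - K)‖ + ‖(Khat - K) * W‖ := norm_sub_le _ _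
      _ ≤ ‖W‖ * ε + ε * ‖W‖ := add_le_add (norm_mul_le _ _) (norm_mul_le _ _)
      _ = 2 * ε * ‖W‖ := by ring
  have hQstar : QE Khat lam Sstar ≤
      ENNReal.ofReal (2 * ε) + ENNReal.ofReal lam * Sstar.card := by
    unfold QE
    refine add_le_add_left ?_ _
    refine le_trans (iInf_le_of_le ⟨W, hWprop⟩ le_rfl) ?_
    exact ENNReal.ofReal_le_ofReal hWbound
  have hfin : ENNReal.ofReal lam * (Sstar.card : ℝ≥0∞) ≠ ⊤ :=
    ENNReal.mul_ne_top ENNReal.ofReal_ne_top (ENNReal.natCast_ne_top _)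
  by_cases hcard : S.card ≤ Sstar.card
  · -- small supports: use c₀
    have hA : ∀ A : {A : Matrix (Fin N) (Fin N) ℝ // A ≠ 0 ∧ A.IsSymm ∧
        ∀ p : Fin N × Fin N, p ∉ S → A p.1 p.2 = 0},
        c0E K Sstar ≤ ENNReal.ofReal (‖(A : Matrix (Fin N) (Fin N) ℝ) * Khat -
          Khat * (A : Matrix (Fin N) (Fin N) ℝ)‖ /
          ‖(A : Matrix (Fin N) (Fin N) ℝ)‖) + ENNReal.ofReal (2 * ε) := by
      rintro ⟨A, hA0, hAsymm, hAsupp⟩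
      have hAnorm : (0:ℝ) < ‖A‖ := norm_pos_iff.mpr hA0
      have hreal : ‖A * K - K * A‖ / ‖A‖ ≤ ‖A * Khat - Khat * A‖ / ‖A‖ + 2 * ε := by
        rw [div_add' _ _ _ (ne_of_gt hAnorm), div_le_div_iff_of_pos_right hAnorm]
        have key : A * K - K * A =
            (A * Khat - Khat * A) - (A * (Khat - K) - (Khat - K) * A) := by
          rw [mul_sub, sub_mul]; abel
        calc ‖A * K - K * A‖
            = ‖(A * Khat - Khat * A) - (A * (Khat - K) - (Khat - K) * A)‖ := by
              rw [key]
          _ ≤ ‖A * Khat - Khat * A‖ + ‖A * (Khat - K) - (Khat - K) * A‖ :=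
              norm_sub_le _ _
          _ ≤ ‖A * Khat - Khat * A‖ + (‖A * (Khat - K)‖ + ‖(Khat - K) * A‖) := by
              gcongr; exact norm_sub_le _ _
          _ ≤ ‖A * Khat - Khat * A‖ + (‖A‖ * ε + ε * ‖A‖) := by
              gcongr <;> exact norm_mul_le _ _
          _ = ‖A * Khat - Khat * A‖ + 2 * ε * ‖A‖ := by ring
      have hc0 : c0E K Sstar ≤ ENNReal.ofReal (‖A * K - K * A‖ / ‖A‖) := by
        unfold c0E
        exact iInf_le_of_le S (iInf_le_of_le hSne (iInf_le_of_le hcard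
          (iInf_le_of_le ⟨A, hA0, hAsymm, hAsupp⟩ le_rfl)))
      refine le_trans hc0 ?_
      calc ENNReal.ofReal (‖A * K - K * A‖ / ‖A‖)
          ≤ ENNReal.ofReal (‖A * Khat - Khat * A‖ / ‖A‖ + 2 * ε) :=
            ENNReal.ofReal_le_ofReal hreal
        _ = ENNReal.ofReal (‖A * Khat - Khat * A‖ / ‖A‖) + ENNReal.ofReal (2 * ε) :=
            ENNReal.ofReal_add (div_nonneg (norm_nonneg _) (norm_nonneg _))
              (by positivity)
    have hQS : c0E K Sstar ≤ QE Khat lam S + ENNReal.ofReal (2 * ε) := by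
      have h' : c0E K Sstar ≤
          (⨅ A : {A : Matrix (Fin N) (Fin N) ℝ // A ≠ 0 ∧ A.IsSymm ∧
            ∀ p : Fin N × Fin N, p ∉ S → A p.1 p.2 = 0},
          ENNReal.ofReal (‖(A : Matrix (Fin N) (Fin N) ℝ) * Khat -
            Khat * (A : Matrix (Fin N) (Fin N) ℝ)‖ /
            ‖(A : Matrix (Fin N) (Fin N) ℝ)‖)) + ENNReal.ofReal (2 * ε) := by
        rw [ENNReal.iInf_add]
        exact le_iInf hA
      refine le_trans h' ?_
      unfold QE
      rw [add_right_comm]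
      exact self_le_add_right _ _
    -- conclude by cancelling 2ε
    have hchain : QE Khat lam Sstar + ENNReal.ofReal (2 * ε) <
        QE Khat lam S + ENNReal.ofReal (2 * ε) := by
      calc QE Khat lam Sstar + ENNReal.ofReal (2 * ε)
          ≤ (ENNReal.ofReal (2 * ε) + ENNReal.ofReal lam * Sstar.card) +
              ENNReal.ofReal (2 * ε) := add_le_add_left hQstar _
        _ = ENNReal.ofReal (4 * ε) + ENNReal.ofReal lam * Sstar.card := by
            rw [add_right_comm, ← ENNReal.ofReal_add (by positivity) (by positivity)]
            congr 2
            ring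
        _ < c0E K Sstar := h2
        _ ≤ QE Khat lam S + ENNReal.ofReal (2 * ε) := hQS
    exact (ENNReal.add_lt_add_iff_right ENNReal.ofReal_ne_top).mp hchain
  · -- large supports: use the penalty
    push_neg at hcard
    have hlow : ENNReal.ofReal lam * Sstar.card + ENNReal.ofReal lam ≤
        QE Khat lam S := by
      have h1' : ENNReal.ofReal lam * Sstar.card + ENNReal.ofReal lam ≤
          ENNReal.ofReal lam * S.card := by
        have hcast : ((Sstar.card : ℝ≥0∞) + 1) ≤ (S.card : ℝ≥0∞) := by
          have : (Sstar.card + 1 : ℕ) ≤ S.card := hcard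
          exact_mod_cast this
        calc ENNReal.ofReal lam * Sstar.card + ENNReal.ofReal lam
            = ENNReal.ofReal lam * ((Sstar.card : ℝ≥0∞) + 1) := by
              rw [mul_add, mul_one]
          _ ≤ ENNReal.ofReal lam * S.card := mul_le_mul_right hcast _
      refine le_trans h1' ?_
      unfold QE
      exact le_add_self
    calc QE Khat lam Sstar
        ≤ ENNReal.ofReal (2 * ε) + ENNReal.ofReal lam * Sstar.card := hQstar
      _ < ENNReal.ofReal lam + ENNReal.ofReal lam * Sstar.card :=
          ENNReal.add_lt_add_right hfin h3
      _ = ENNReal.ofReal lam * Sstar.card + ENNReal.ofReal lam := add_comm _ _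
      _ ≤ QE Khat lam S := hlow
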